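/- Let P : ℝ^p → ℝ be convex, nonnegative, and positively homogeneous of degree one, i.e., P(c • v) = c * P(v) for all c ≥ 0 and all v ∈ ℝ^p. Let λ ≥ 0 and a ∈ ℝ^p. Suppose v̂ ∈ ℝ^p is a global minimizer over ℝ^p of the penalized regression objective g(v) = (1/2)‖a − v‖₂² + λ P(v), and suppose v̂ ≠ 0. Then v* = v̂ / ‖v̂‖₂ is a global maximizer of f(v) = ⟨a, v⟩ − λ P(v) over the closed unit ball {v : ‖v‖₂ ≤ 1}. -/

import Mathlib

open RealInnerProductSpace

/-- the v-coordinate update of Proposition 1 (RPLS solution).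
If `v̂ ≠ 0` globally minimizes the penalized regression objective
`(1/2)‖a − v‖² + λ P(v)` for a convex, nonnegative, positively homogeneous
penalty `P`, then `v* = v̂/‖v̂‖` globally maximizes `⟨a, v⟩ − λ P(v)` over the
closed unit ball. -/
theorem rpls_v_update {p : ℕ} (P : EuclideanSpace ℝ (Fin p) → ℝ)
    (hconv : ConvexOn ℝ Set.univ P) (hnonneg : ∀ v, 0 ≤ P v)
    (hhom : ∀ c : ℝ, 0 ≤ c → ∀ v, P (c • v) = c * P v)
    (lam : ℝ) (hlam : 0 ≤ lam) (a : EuclideanSpace ℝ (Fin p))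
    (vhat : EuclideanSpace ℝ (Fin p))
    (hmin : ∀ v : EuclideanSpace ℝ (Fin p),
      (1 / 2) * ‖a - vhat‖ ^ 2 + lam * P vhat ≤ (1 / 2) * ‖a - v‖ ^ 2 + lam * P v)
    (hne : vhat ≠ 0) :
    ‖(‖vhat‖⁻¹ • vhat : EuclideanSpace ℝ (Fin p))‖ ≤ 1 ∧
    ∀ v : EuclideanSpace ℝ (Fin p), ‖v‖ ≤ 1 →
      ⟪a, v⟫ - lam * P v ≤ ⟪a, ‖vhat‖⁻¹ • vhat⟫ - lam * P (‖vhat‖⁻¹ • vhat) := by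
  have hpos : (0:ℝ) < ‖vhat‖ := norm_pos_iff.mpr hne
  set h : ℝ := ‖vhat‖ with hh
  set F : ℝ := ⟪a, vhat⟫ - lam * P vhat with hF
  -- key rearranged optimality inequality
  have key : ∀ v : EuclideanSpace ℝ (Fin p),
      (⟪a, v⟫ - lam * P v) - (1/2) * ‖v‖^2 ≤ F - (1/2) * h^2 := by
    intro v
    have h1 := hmin v
    have e1 : ‖a - v‖^2 = ‖a‖^2 - 2*⟪a,v⟫ + ‖v‖^2 := norm_sub_sq_real a v
    have e2 : ‖a - vhat‖^2 = ‖a‖^2 - 2*⟪a,vhat⟫ + ‖vhat‖^2 := norm_sub_sq_real a vhat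
    rw [e1, e2] at h1
    simp only [hF, hh]
    linarith
  have hP0 : P 0 = 0 := by
    have := hhom 0 le_rfl 0
    simpa using this
  -- homogeneity of the objective
  have fhom : ∀ t : ℝ, 0 ≤ t → ∀ v : EuclideanSpace ℝ (Fin p),
      ⟪a, t • v⟫ - lam * P (t • v) = t * (⟪a, v⟫ - lam * P v) := by
    intro t ht v
    rw [real_inner_smul_right, hhom t ht v]; ring
  have nsmul : ∀ t : ℝ, 0 ≤ t → ∀ v : EuclideanSpace ℝ (Fin p),
      ‖t • v‖ = t * ‖v‖ := by
    intro t ht v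
    rw [norm_smul, Real.norm_eq_abs, abs_of_nonneg ht]
  -- F ≥ h²/2 > 0
  have hF0 : (1/2) * h^2 ≤ F := by
    have := key 0
    simp [hP0] at this
    linarith
  have hFpos : 0 < F := by nlinarith
  -- F = h²
  have hFeq : F = h^2 := by
    have ht : 0 ≤ F / h^2 := le_of_lt (div_pos hFpos (by positivity))
    have k := key ((F / h^2) • vhat)
    rw [fhom _ ht, nsmul _ ht] at k
    have hne2 : h^2 ≠ 0 := by positivity
    have : (F / h^2) * F - (1/2) * ((F / h^2) * h)^2 ≤ F - (1/2) * h^2 := by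
      simpa using k
    have hsq : ((F / h^2) * h)^2 = F^2 / h^2 := by
      field_simp
    rw [hsq] at this
    have h2 : F^2 / h^2 * h^2 = F^2 := by field_simp
    have h3 : (F / h^2) * F * h^2 = F^2 := by field_simp
    nlinarith [this, sq_nonneg (F - h^2)]
  -- value at v*
  have hstar : ⟪a, h⁻¹ • vhat⟫ - lam * P (h⁻¹ • vhat) = h := by
    rw [fhom _ (by positivity) vhat]
    rw [← hF, hFeq]
    field_simp
  constructor
  · rw [nsmul _ (by positivity) vhat]
    rw [← hh]
    rw [inv_mul_cancel₀ (ne_of_gt hpos)]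
  · intro v hv
    rw [hstar]
    rcases le_or_gt (⟪a, v⟫ - lam * P v) 0 with hle | hgt
    · linarith
    · set t : ℝ := ⟪a, v⟫ - lam * P v with hT
      have k := key (t • v)
      rw [fhom _ (le_of_lt hgt), nsmul _ (le_of_lt hgt)] at k
      rw [hFeq] at k
      have hnv : 0 ≤ ‖v‖ := norm_nonneg v
      nlinarith [sq_nonneg (t - h), sq_nonneg t, mul_le_one₀ hv hnv hv]
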